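/- Let Q be a finite nonempty set of points in ℝ^d with minimum enclosing ball of center c_Q and radius r_Q, let ε' ∈ (0,1), and let the sequence (c_t)_{t≥1} be defined by c_1 ∈ Q and c_{t+1} = c_t + (1/(t+1))·(q_t − c_t) with q_t a farthest point of Q from c_t. Then for N = ⌈1/ε'²⌉, every point of Q lies within distance (1+ε')·r_Q of c_N; that is, c_N is the center of a (1+ε')-approximate minimum enclosing ball of Q. -/

import Mathlib

open scoped RealInnerProductSpace

/-- `IsMEB P c r` says the closed ball of center `c` and radius `r` is the minimum enclosing
ball of `P`: it contains `P`, and any ball containing `P` has radius at least `r`. -/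
def IsMEB {d : ℕ} (P : Set (EuclideanSpace ℝ (Fin d)))
    (c : EuclideanSpace ℝ (Fin d)) (r : ℝ) : Prop :=
  (∀ p ∈ P, dist p c ≤ r) ∧
    ∀ (c' : EuclideanSpace ℝ (Fin d)) (r' : ℝ), (∀ p ∈ P, dist p c' ≤ r') → r ≤ r'

/-- Pure arithmetic core of the Badoiu–Clarkson induction step. -/
lemma bc_arith (t A B K r : ℝ) (ht : 1 ≤ t) (IH : t * A ^ 2 ≤ r ^ 2)
    (h1 : r ^ 2 + A ^ 2 ≤ K ^ 2) (h2 : K ^ 2 + 2 * B + A ^ 2 ≤ r ^ 2) :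
    (t + 1) * (A ^ 2 + 2 * (1 / (t + 1) * B) + (1 / (t + 1)) ^ 2 * K ^ 2) ≤ r ^ 2 := by
  have hτ : (0:ℝ) < t + 1 := by linarith
  have hpoly : (t + 1) ^ 2 * A ^ 2 + 2 * (t + 1) * B + K ^ 2 ≤ (t + 1) * r ^ 2 := by
    nlinarith [mul_le_mul_of_nonneg_left h2 hτ.le,
      mul_nonneg (by linarith : (0:ℝ) ≤ t + 1 - 1)
        (by nlinarith : (0:ℝ) ≤ K ^ 2 - (t + 1) * A ^ 2)]
  have heq : (t + 1) * (A ^ 2 + 2 * (1 / (t + 1) * B) + (1 / (t + 1)) ^ 2 * K ^ 2)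
      = ((t + 1) ^ 2 * A ^ 2 + 2 * (t + 1) * B + K ^ 2) / (t + 1) := by
    field_simp
  rw [heq, div_le_iff₀ hτ]
  nlinarith [hpoly]

/-- Key geometric property of the MEB center of a finite set: for every vector `u` there is a
point `p` of `Q` with `rQ² ≤ ‖p - cQ‖² - 2⟪p - cQ, u⟫` (a point "behind" the center relative
to `u`).  Proved by perturbing the center slightly in direction `u` otherwise. -/
lemma bc_key {d : ℕ} (Q : Set (EuclideanSpace ℝ (Fin d))) (hfin : Q.Finite) (hne : Q.Nonempty)
    (cQ : EuclideanSpace ℝ (Fin d)) (rQ : ℝ) (hmeb : IsMEB Q cQ rQ)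
    (u : EuclideanSpace ℝ (Fin d)) :
    ∃ p ∈ Q, rQ^2 ≤ ‖p - cQ‖^2 - 2 * ⟪p - cQ, u⟫ := by
  have hrQ : 0 ≤ rQ := by
    obtain ⟨p0, hp0⟩ := hne
    exact le_trans dist_nonneg (hmeb.1 p0 hp0)
  by_contra hcon
  push_neg at hcon
  set F := hfin.toFinset with hF
  have hFne : F.Nonempty := by
    obtain ⟨p0, hp0⟩ := hne
    exact ⟨p0, hfin.mem_toFinset.2 hp0⟩
  set s := F.inf' hFne (fun p => rQ^2 - (‖p - cQ‖^2 - 2 * ⟪p - cQ, u⟫)) with hs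
  have hspos : 0 < s := by
    rw [hs, Finset.lt_inf'_iff]
    intro p hp
    have := hcon p (hfin.mem_toFinset.1 hp)
    linarith
  set δ := s / (‖u‖^2 + s) with hδ
  have hden : 0 < ‖u‖^2 + s := by positivity
  have hδpos : 0 < δ := div_pos hspos hden
  have hδ1 : δ ≤ 1 := by
    rw [hδ, div_le_one hden]
    nlinarith [sq_nonneg ‖u‖]
  have hδu : δ * ‖u‖^2 < s := by
    have : δ * (‖u‖^2 + s) = s := by
      rw [hδ]; field_simp
    nlinarith
  -- every point is strictly within rQ of the perturbed center
  have hlt : ∀ p ∈ Q, dist p (cQ + δ • u) < rQ := by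
    intro p hp
    have hA : ‖p - cQ‖ ≤ rQ := by
      rw [← dist_eq_norm]; exact hmeb.1 p hp
    have hA2 : ‖p - cQ‖^2 ≤ rQ^2 := by nlinarith [norm_nonneg (p - cQ)]
    have hAB : ‖p - cQ‖^2 - 2 * ⟪p - cQ, u⟫ ≤ rQ^2 - s := by
      have := Finset.inf'_le (b := p)
        (f := fun p => rQ^2 - (‖p - cQ‖^2 - 2 * ⟪p - cQ, u⟫)) (hfin.mem_toFinset.2 hp)
      rw [← hs] at this
      linarith
    have hexp : dist p (cQ + δ • u) ^ 2
        = ‖p - cQ‖^2 - 2 * (δ * ⟪p - cQ, u⟫) + δ^2 * ‖u‖^2 := by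
      rw [dist_eq_norm]
      have : p - (cQ + δ • u) = (p - cQ) - δ • u := by abel
      rw [this, norm_sub_sq_real, real_inner_smul_right, norm_smul]
      rw [Real.norm_eq_abs, abs_of_pos hδpos]
      ring
    have hsq : dist p (cQ + δ • u) ^ 2 < rQ^2 := by
      rw [hexp]
      nlinarith [sq_nonneg ‖u‖, sq_nonneg δ]
    nlinarith [dist_nonneg (x := p) (y := cQ + δ • u)]
  -- the farthest point from the perturbed center gives a ball of radius < rQ
  obtain ⟨p1, hp1F, hp1⟩ := Finset.exists_mem_eq_sup' hFne (fun p => dist p (cQ + δ • u))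
  have hmax : ∀ p ∈ Q, dist p (cQ + δ • u) ≤ dist p1 (cQ + δ • u) := by
    intro p hp
    rw [← hp1]
    exact Finset.le_sup' (f := fun p => dist p (cQ + δ • u)) (hfin.mem_toFinset.2 hp)
  have := hmeb.2 (cQ + δ • u) (dist p1 (cQ + δ • u)) hmax
  have := hlt p1 (hfin.mem_toFinset.1 hp1F)
  linarith

/-- with `Q`, `c_Q`, `r_Q` and the sequence `(c_t)` as in the Badoiu–Clarkson
iteration (`c₁ ∈ Q`, `c_{t+1} = c_t + (1/(t+1))·(q_t − c_t)` with `q_t ∈ Q` farthest from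
`c_t`), for `ε' ∈ (0,1)` and `N = ⌈1/ε'²⌉`, every point of `Q` lies within distance
`(1+ε')·r_Q` of `c_N`. -/
theorem badoiu_clarkson_approx_meb {d : ℕ}
    (Q : Set (EuclideanSpace ℝ (Fin d))) (hfin : Q.Finite) (hne : Q.Nonempty)
    (cQ : EuclideanSpace ℝ (Fin d)) (rQ : ℝ) (hmeb : IsMEB Q cQ rQ)
    (c q : ℕ → EuclideanSpace ℝ (Fin d))
    (hc1 : c 1 ∈ Q)
    (hqmem : ∀ t : ℕ, 1 ≤ t → q t ∈ Q)
    (hqfar : ∀ t : ℕ, 1 ≤ t → ∀ p ∈ Q, dist p (c t) ≤ dist (q t) (c t))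
    (hrec : ∀ t : ℕ, 1 ≤ t → c (t + 1) = c t + (1 / ((t : ℝ) + 1)) • (q t - c t))
    (ε' : ℝ) (hε : 0 < ε') (hε1 : ε' < 1) (N : ℕ) (hN : N = ⌈1 / ε' ^ 2⌉₊) :
    ∀ p ∈ Q, dist p (c N) ≤ (1 + ε') * rQ := by
  have hrQ : 0 ≤ rQ := by
    obtain ⟨p0, hp0⟩ := hne
    exact le_trans dist_nonneg (hmeb.1 p0 hp0)
  -- main induction: t * dist(c_t, c_Q)² ≤ r_Q²
  have main : ∀ t : ℕ, 1 ≤ t → (t : ℝ) * dist (c t) cQ ^ 2 ≤ rQ ^ 2 := by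
    intro t ht
    induction t, ht using Nat.le_induction with
    | base =>
      have h1 : dist (c 1) cQ ≤ rQ := hmeb.1 _ hc1
      have h0 : 0 ≤ dist (c 1) cQ := dist_nonneg
      push_cast
      nlinarith
    | succ t ht IH =>
      obtain ⟨p, hpQ, hpineq⟩ := bc_key Q hfin hne cQ rQ hmeb (c t - cQ)
      have ht1 : (1:ℝ) ≤ (t : ℝ) := by exact_mod_cast ht
      have hτ : (0:ℝ) < (t : ℝ) + 1 := by positivity
      have hdA : dist (c t) cQ = ‖c t - cQ‖ := dist_eq_norm _ _
      have IH' : (t:ℝ) * ‖c t - cQ‖ ^ 2 ≤ rQ ^ 2 := by rwa [hdA] at IH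
      -- h1 : rQ² + ‖c t - cQ‖² ≤ ‖q t - c t‖²
      have e1 : ‖p - c t‖ ^ 2
          = ‖p - cQ‖ ^ 2 - 2 * ⟪p - cQ, c t - cQ⟫ + ‖c t - cQ‖ ^ 2 := by
        rw [show p - c t = (p - cQ) - (c t - cQ) by abel]
        exact norm_sub_sq_real _ _
      have hple : ‖p - c t‖ ≤ ‖q t - c t‖ := by
        rw [← dist_eq_norm, ← dist_eq_norm]
        exact hqfar t ht p hpQ
      have h1 : rQ ^ 2 + ‖c t - cQ‖ ^ 2 ≤ ‖q t - c t‖ ^ 2 := by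
        nlinarith [norm_nonneg (p - c t), norm_nonneg (q t - c t)]
      -- h2 : ‖q t - c t‖² + 2⟪c t - cQ, q t - c t⟫ + ‖c t - cQ‖² ≤ rQ²
      have e2 : ‖q t - cQ‖ ^ 2
          = ‖q t - c t‖ ^ 2 + 2 * ⟪c t - cQ, q t - c t⟫ + ‖c t - cQ‖ ^ 2 := by
        rw [show q t - cQ = (q t - c t) + (c t - cQ) by abel, norm_add_sq_real,
          real_inner_comm]
      have hq : ‖q t - cQ‖ ≤ rQ := by
        rw [← dist_eq_norm]; exact hmeb.1 _ (hqmem t ht)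
      have h2 : ‖q t - c t‖ ^ 2 + 2 * ⟪c t - cQ, q t - c t⟫ + ‖c t - cQ‖ ^ 2
          ≤ rQ ^ 2 := by
        nlinarith [norm_nonneg (q t - cQ)]
      -- expansion of the new squared distance
      have hexp : dist (c (t + 1)) cQ ^ 2
          = ‖c t - cQ‖ ^ 2 + 2 * (1 / ((t:ℝ) + 1) * ⟪c t - cQ, q t - c t⟫)
            + (1 / ((t:ℝ) + 1)) ^ 2 * ‖q t - c t‖ ^ 2 := by
        rw [dist_eq_norm, hrec t ht,
          show c t + (1 / ((t:ℝ) + 1)) • (q t - c t) - cQ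
            = (c t - cQ) + (1 / ((t:ℝ) + 1)) • (q t - c t) by abel,
          norm_add_sq_real, real_inner_smul_right, norm_smul, Real.norm_eq_abs,
          abs_of_pos (by positivity : (0:ℝ) < 1 / ((t:ℝ) + 1))]
        ring
      push_cast
      rw [hexp]
      exact bc_arith (t:ℝ) ‖c t - cQ‖ ⟪c t - cQ, q t - c t⟫ ‖q t - c t‖ rQ
        ht1 IH' h1 h2
  -- conclude
  have hN1 : 1 ≤ N := by
    rw [hN]
    exact Nat.one_le_ceil_iff.2 (by positivity)
  have hNge : 1 / ε' ^ 2 ≤ (N : ℝ) := by rw [hN]; exact Nat.le_ceil _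
  have h1e : 1 ≤ (N : ℝ) * ε' ^ 2 := by
    rw [div_le_iff₀ (by positivity : (0:ℝ) < ε' ^ 2)] at hNge
    linarith
  have hmain := main N hN1
  have hd2 : dist (c N) cQ ^ 2 ≤ ε' ^ 2 * rQ ^ 2 := by
    nlinarith [sq_nonneg (dist (c N) cQ),
      mul_le_mul_of_nonneg_right hmain (sq_nonneg ε'),
      mul_le_mul_of_nonneg_right h1e (sq_nonneg (dist (c N) cQ))]
  have hdist : dist (c N) cQ ≤ ε' * rQ := by
    nlinarith [dist_nonneg (x := c N) (y := cQ), mul_nonneg hε.le hrQ]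
  intro p hp
  calc dist p (c N) ≤ dist p cQ + dist cQ (c N) := dist_triangle _ _ _
    _ ≤ rQ + ε' * rQ := by
        rw [dist_comm cQ (c N)]
        exact add_le_add (hmeb.1 p hp) hdist
    _ = (1 + ε') * rQ := by ring
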